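/- arXiv:1503.08434 — 2 statements merged into one kernel-verified Lean document; each statement's English description precedes it below -/
import Mathlib

section
/- For λ > 0, R_c > 0, α ≥ 2, and a > 0: 2πλ ∫₀^{R_c} r·exp(−λπ r²) / (1 + a·r^α) dr = Σ_{k=0}^∞ (−1)ᵏ (λπ R_c²)^{k+1} / Γ(k+2) · ₂F₁(1, 2(k+1)/α; 2(k+1)/α + 1; −a·R_c^α). -/
open Real Set intervalIntegral
open MeasureTheory

/-- The Gauss hypergeometric function `₂F₁(a, b; c; x)` defined by its Euler integral
representation (valid for `c > b > 0` and `x < 1`). -/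
noncomputable def hyp2F1 (a b c x : ℝ) : ℝ :=
  (Real.Gamma c / (Real.Gamma b * Real.Gamma (c - b))) *
    ∫ t in (0:ℝ)..1, t ^ (b - 1) * (1 - t) ^ (c - b - 1) * (1 - x * t) ^ (-a)

theorem subst_lemma (Rc α a : ℝ) (hRc : 0 < Rc) (hα : 2 ≤ α) (ha : 0 < a) (k : ℕ) :
    ∫ t in (0:ℝ)..1, t ^ (2*((k:ℝ)+1)/α - 1) * (1 + (a*Rc^α) * t)⁻¹
      = (α / Rc^(2*k+2)) * ∫ r in (0:ℝ)..Rc, r^(2*k+1) * (1 + a*r^α)⁻¹ := by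
  have hα0 : (0:ℝ) < α := by linarith
  have hb : (0:ℝ) < 2*((k:ℝ)+1)/α := by positivity
  set b : ℝ := 2*((k:ℝ)+1)/α with hbdef
  set c : ℝ := a * Rc ^ α with hcdef
  have hc : 0 < c := by
    have := Real.rpow_pos_of_pos hRc α
    positivity
  set g : ℝ → ℝ := fun t => t ^ (b-1) * (1 + c * t)⁻¹ with hgdef
  set f : ℝ → ℝ := fun x => (x / Rc) ^ α with hfdef
  set f' : ℝ → ℝ := fun x => α * (x/Rc)^(α-1) * (1/Rc) with hf'def
  have hRcne : Rc ≠ 0 := hRc.ne'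
  have hcontpow : Continuous fun x : ℝ => x ^ α :=
    continuous_iff_continuousAt.2 fun x => Real.continuousAt_rpow_const x α (Or.inr hα0.le)
  have hf : ContinuousOn f (uIcc 0 Rc) :=
    (hcontpow.comp (continuous_id.div_const Rc)).continuousOn
  have hmin : min 0 Rc = 0 := min_eq_left hRc.le
  have hmax : max 0 Rc = Rc := max_eq_right hRc.le
  have huIcc : uIcc (0:ℝ) Rc = Icc 0 Rc := uIcc_of_le hRc.le
  have hbne : α * (b - 1) + (α - 1) ≠ 0 := by
    have : α * (b-1) + (α-1) = 2*(k:ℝ)+1 := by rw [hbdef]; field_simp; ring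
    rw [this]; positivity
  -- pointwise identity
  have hEq : ∀ x ∈ Icc (0:ℝ) Rc,
      f' x • g (f x) = α / Rc^(2*k+2) * (x^(2*k+1) * (1 + a*x^α)⁻¹) := by
    intro x hx
    have hx0 : 0 ≤ x := hx.1
    have hs0 : 0 ≤ x / Rc := by positivity
    have h1 : ((x/Rc) ^ α) ^ (b-1) = (x/Rc) ^ (α * (b-1)) := (Real.rpow_mul hs0 _ _).symm
    have h2 : (x/Rc)^(α-1) * (x/Rc)^(α*(b-1)) = (x/Rc)^((α-1) + α*(b-1)) :=
      (Real.rpow_add' hs0 (by rw [add_comm]; exact hbne)).symm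
    have he : (α-1) + α*(b-1) = ((2*k+1 : ℕ) : ℝ) := by
      rw [hbdef]; push_cast; field_simp; ring
    have h3 : (x/Rc)^((α-1) + α*(b-1)) = (x/Rc)^(2*k+1 : ℕ) := by
      rw [he, Real.rpow_natCast]
    have h4 : c * (x/Rc)^α = a * x^α := by
      rw [Real.div_rpow hx0 hRc.le, hcdef]
      field_simp
    have hRcα : Rc ^ (2*k+2) = Rc^(2*k+1) * Rc := by ring
    simp only [hf'def, hgdef, hfdef, smul_eq_mul, h1, h4]
    rw [show α * (x / Rc) ^ (α - 1) * (1 / Rc) * ((x / Rc) ^ (α * (b - 1)) * (1 + a * x ^ α)⁻¹)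
        = α * ((x/Rc)^(α-1) * (x/Rc)^(α*(b-1))) * (1/Rc) * (1 + a*x^α)⁻¹ by ring, h2, h3]
    rw [div_pow, hRcα]
    field_simp
    try ring
  have key : (∫ x in (0:ℝ)..Rc, f' x • g (f x)) = ∫ u in (f 0)..(f Rc), g u := by
    apply intervalIntegral.integral_comp_smul_deriv''' (f := f) (f' := f') (g := g) hf
    · rw [hmin, hmax]
      intro x hx
      have hxpos : 0 < x / Rc := by have := hx.1; positivity
      have hd : HasDerivAt f (f' x) x := by
        have h1 : HasDerivAt (fun y : ℝ => y ^ α) (α * (x/Rc)^(α-1)) (x/Rc) :=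
          Real.hasDerivAt_rpow_const (Or.inl hxpos.ne')
        have h2 : HasDerivAt (fun y : ℝ => y / Rc) (1/Rc) x := by
          simpa using (hasDerivAt_id x).div_const Rc
        exact h1.comp x h2
      exact hd.hasDerivWithinAt
    · -- continuity of g on f '' Ioo
      rw [hmin, hmax]
      have hsub : f '' Ioo 0 Rc ⊆ Ioi 0 := by
        rintro _ ⟨x, hx, rfl⟩
        exact Real.rpow_pos_of_pos (by have := hx.1; positivity) α
      refine ContinuousOn.mono ?_ hsub
      apply ContinuousOn.mul
      · intro t ht
        exact (Real.continuousAt_rpow_const t _ (Or.inl (ne_of_gt ht))).continuousWithinAt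
      · apply ContinuousOn.inv₀
        · fun_prop
        · intro t ht
          have : (0:ℝ) < t := ht
          positivity
    · -- integrability of g on image
      have hsub : f '' uIcc 0 Rc ⊆ Icc 0 1 := by
        rintro _ ⟨x, hx, rfl⟩
        rw [huIcc] at hx
        constructor
        · exact Real.rpow_nonneg (by have := hx.1; positivity) α
        · exact Real.rpow_le_one (by have := hx.1; positivity)
            (by rw [div_le_one hRc]; exact hx.2) hα0.le
      refine IntegrableOn.mono_set ?_ hsub
      rw [← intervalIntegrable_iff_integrableOn_Icc_of_le zero_le_one]
      apply IntervalIntegrable.mul_continuousOn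
      · exact intervalIntegral.intervalIntegrable_rpow' (by linarith)
      · apply ContinuousOn.inv₀
        · fun_prop
        · intro t ht
          rw [uIcc_of_le (zero_le_one' ℝ)] at ht
          have := ht.1
          positivity
    · -- integrability of x ↦ f' x • g (f x)
      rw [huIcc]
      have hcont2 : ContinuousOn
          (fun x : ℝ => α / Rc^(2*k+2) * (x^(2*k+1) * (1 + a*x^α)⁻¹)) (Icc 0 Rc) := by
        apply ContinuousOn.mul continuousOn_const
        apply ContinuousOn.mul (by fun_prop)
        apply ContinuousOn.inv₀
        · exact (continuous_const.add (continuous_const.mul hcontpow)).continuousOn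
        · intro x hx
          have hx0 : 0 ≤ x := hx.1
          have := Real.rpow_nonneg hx0 α
          positivity
      exact hcont2.integrableOn_Icc.congr_fun (fun x hx => (hEq x hx).symm) measurableSet_Icc
  have hf0 : f 0 = 0 := by
    simp [hfdef, Real.zero_rpow hα0.ne']
  have hf1 : f Rc = 1 := by
    simp [hfdef, div_self hRcne]
  calc ∫ t in (0:ℝ)..1, t ^ (b - 1) * (1 + c * t)⁻¹
      = ∫ u in (f 0)..(f Rc), g u := by rw [hf0, hf1]
    _ = ∫ x in (0:ℝ)..Rc, f' x • g (f x) := key.symm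
    _ = ∫ x in (0:ℝ)..Rc, α / Rc^(2*k+2) * (x^(2*k+1) * (1 + a*x^α)⁻¹) := by
        apply intervalIntegral.integral_congr
        rw [huIcc]; exact hEq
    _ = (α / Rc^(2*k+2)) * ∫ r in (0:ℝ)..Rc, r^(2*k+1) * (1 + a*r^α)⁻¹ :=
        intervalIntegral.integral_const_mul _ _

theorem hyp_val (Rc α a : ℝ) (hRc : 0 < Rc) (hα : 2 ≤ α) (ha : 0 < a) (k : ℕ) :
    hyp2F1 1 (2*((k:ℝ)+1)/α) (2*((k:ℝ)+1)/α + 1) (-(a*Rc^α))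
      = (2*((k:ℝ)+1)) / Rc^(2*k+2) * ∫ r in (0:ℝ)..Rc, r^(2*k+1) * (1+a*r^α)⁻¹ := by
  have hα0 : (0:ℝ) < α := by linarith
  have hb : (0:ℝ) < 2*((k:ℝ)+1)/α := by positivity
  set b : ℝ := 2*((k:ℝ)+1)/α with hbdef
  unfold hyp2F1
  have h1 : b + 1 - b = 1 := by ring
  have h2 : b + 1 - b - 1 = 0 := by ring
  rw [h1, Real.Gamma_one, Real.Gamma_add_one hb.ne']
  have hG : Real.Gamma b ≠ 0 := (Real.Gamma_pos_of_pos hb).ne'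
  rw [show b * Real.Gamma b / (Real.Gamma b * 1) = b by field_simp]
  simp only [h2, Real.rpow_zero, mul_one, neg_mul, neg_neg, sub_neg_eq_add,
    Real.rpow_neg_one, sub_self]
  rw [subst_lemma Rc α a hRc hα ha k]
  rw [hbdef]
  rw [← mul_assoc]
  congr 1
  field_simp

/-- Proposition 3: for `λ, R_c, a > 0` and `α ≥ 2`,
`2πλ ∫₀^{R_c} r e^{−λπr²}/(1 + a rᵅ) dr
  = Σ_k (−1)ᵏ (λπR_c²)^{k+1}/Γ(k+2) · ₂F₁(1, 2(k+1)/α; 2(k+1)/α + 1; −a R_cᵅ)`. -/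
theorem stmt7 (lam Rc α a : ℝ) (hlam : 0 < lam) (hRc : 0 < Rc) (hα : 2 ≤ α) (ha : 0 < a) :
    2 * π * lam * ∫ r in (0:ℝ)..Rc, r * Real.exp (-(lam * π * r ^ 2)) / (1 + a * r ^ α)
      = ∑' k : ℕ, (-1 : ℝ) ^ k * (lam * π * Rc ^ 2) ^ (k + 1) / Real.Gamma ((k : ℝ) + 2) *
          hyp2F1 1 (2 * ((k : ℝ) + 1) / α) (2 * ((k : ℝ) + 1) / α + 1) (-(a * Rc ^ α)) := by
  have hα0 : (0:ℝ) < α := by linarith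
  set M : ℝ := lam * π with hM
  have hM0 : 0 < M := by have := Real.pi_pos; positivity
  set F : ℕ → ℝ → ℝ := fun k r => ((-M)^k / ((Nat.factorial k : ℕ) : ℝ)) * (r^(2*k+1) * (1 + a*r^α)⁻¹)
    with hF
  have hD : ∀ r : ℝ, 0 ≤ r → (0:ℝ) < 1 + a * r^α := by
    intro r hr
    have := Real.rpow_nonneg hr α
    positivity
  -- pointwise has-sum
  have hsum : ∀ r : ℝ, HasSum (fun k => F k r)
      (r * Real.exp (-(M * r ^ 2)) / (1 + a * r ^ α)) := by
    intro r
    have h := NormedSpace.expSeries_div_hasSum_exp (𝔸 := ℝ) (-(M * r ^ 2))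
    rw [← Real.exp_eq_exp_ℝ] at h
    have h2 := h.mul_left (r * (1 + a*r^α)⁻¹)
    have hfun : (fun k => r * (1 + a*r^α)⁻¹ * ((-(M * r ^ 2))^k / ((Nat.factorial k : ℕ) : ℝ)))
        = fun k => F k r := by
      funext k
      rw [hF]
      ring
    rw [hfun] at h2
    convert h2 using 1
    · rfl
    · ring
  -- continuity and integrability of F k
  have hFint : ∀ k : ℕ, IntegrableOn (F k) (Ioc 0 Rc) := by
    intro k
    have hcont : ContinuousOn (F k) (Icc 0 Rc) := by
      apply ContinuousOn.mul continuousOn_const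
      apply ContinuousOn.mul (by fun_prop)
      apply ContinuousOn.inv₀
      · apply ContinuousOn.add continuousOn_const
        apply ContinuousOn.mul continuousOn_const
        intro x _
        exact (Real.continuousAt_rpow_const x α (Or.inr hα0.le)).continuousWithinAt
      · exact fun x hx => (hD x hx.1).ne'
    exact hcont.integrableOn_Icc.mono_set Ioc_subset_Icc_self
  -- summability of the integrals of norms
  have hbound : ∀ k : ℕ, (∫ r in Ioc (0:ℝ) Rc, ‖F k r‖) ≤ (M*Rc^2)^k / ((Nat.factorial k : ℕ) : ℝ) * Rc^2 := by
    intro k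
    have hIoc : volume (Ioc (0:ℝ) Rc) < ⊤ := by
      rw [Real.volume_Ioc]; exact ENNReal.ofReal_lt_top
    have hC : ∀ r ∈ Ioc (0:ℝ) Rc, ‖‖F k r‖‖ ≤ M^k / ((Nat.factorial k : ℕ) : ℝ) * Rc^(2*k+1) := by
      intro r hr
      rw [norm_norm, hF]
      have hr0 : 0 < r := hr.1
      have hinv : |(1 + a*r^α)⁻¹| ≤ 1 := by
        rw [abs_inv, abs_of_pos (hD r hr0.le)]
        rw [inv_le_one_iff₀]
        right
        have := Real.rpow_nonneg hr0.le α
        nlinarith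
      calc ‖(-M)^k / ((Nat.factorial k : ℕ) : ℝ) * (r^(2*k+1) * (1 + a*r^α)⁻¹)‖
          = M^k / ((Nat.factorial k : ℕ) : ℝ) * (r^(2*k+1) * |(1 + a*r^α)⁻¹|) := by
            rw [norm_mul, norm_mul, norm_div, norm_pow, norm_neg, Real.norm_of_nonneg hM0.le,
              Real.norm_of_nonneg (by positivity : (0:ℝ) ≤ ((Nat.factorial k : ℕ) : ℝ)),
              Real.norm_of_nonneg (by positivity : (0:ℝ) ≤ r^(2*k+1)), Real.norm_eq_abs]
        _ ≤ M^k / ((Nat.factorial k : ℕ) : ℝ) * (Rc^(2*k+1) * 1) := by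
            apply mul_le_mul_of_nonneg_left _ (by positivity)
            apply mul_le_mul (pow_le_pow_left₀ hr0.le hr.2 _) hinv (abs_nonneg _) (by positivity)
        _ = M^k / ((Nat.factorial k : ℕ) : ℝ) * Rc^(2*k+1) := by ring
    have := MeasureTheory.norm_setIntegral_le_of_norm_le_const (μ := volume) hIoc hC
    rw [Real.norm_of_nonneg (MeasureTheory.integral_nonneg (fun r => norm_nonneg _))] at this
    calc (∫ r in Ioc (0:ℝ) Rc, ‖F k r‖)
        ≤ M^k / ((Nat.factorial k : ℕ) : ℝ) * Rc^(2*k+1) * (volume (Ioc (0:ℝ) Rc)).toReal := this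
      _ = M^k / ((Nat.factorial k : ℕ) : ℝ) * Rc^(2*k+1) * Rc := by
          rw [Real.volume_Ioc, sub_zero, ENNReal.toReal_ofReal hRc.le]
      _ = (M*Rc^2)^k / ((Nat.factorial k : ℕ) : ℝ) * Rc^2 := by ring
  have hSum : Summable fun k : ℕ => ∫ r in Ioc (0:ℝ) Rc, ‖F k r‖ := by
    apply Summable.of_nonneg_of_le
      (fun k => MeasureTheory.integral_nonneg (fun r => norm_nonneg _)) hbound
    exact (Real.summable_pow_div_factorial (M*Rc^2)).mul_right _
  -- swap
  have hswap := MeasureTheory.integral_tsum_of_summable_integral_norm hFint hSum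
  have hint_eq : ∫ r in (0:ℝ)..Rc, r * Real.exp (-(M * r ^ 2)) / (1 + a * r ^ α)
      = ∑' k : ℕ, ∫ r in Ioc (0:ℝ) Rc, F k r := by
    rw [intervalIntegral.integral_of_le hRc.le, hswap]
    apply MeasureTheory.setIntegral_congr_fun measurableSet_Ioc
    intro r _
    exact ((hsum r).tsum_eq).symm
  rw [hint_eq, ← tsum_mul_left]
  apply tsum_congr
  intro k
  rw [hyp_val Rc α a hRc hα ha k]
  have hIeq : ∫ r in Ioc (0:ℝ) Rc, F k r
      = ((-M)^k / ((Nat.factorial k : ℕ) : ℝ)) * ∫ r in (0:ℝ)..Rc, r^(2*k+1) * (1 + a*r^α)⁻¹ := by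
    rw [intervalIntegral.integral_of_le hRc.le, ← MeasureTheory.integral_const_mul]
  rw [hIeq]
  have hGamma : Real.Gamma ((k:ℝ) + 2) = ((Nat.factorial (k+1) : ℕ) : ℝ) := by
    rw [show ((k:ℝ) + 2) = ((k+1 : ℕ) : ℝ) + 1 by push_cast; ring,
      Real.Gamma_nat_eq_factorial]
  rw [hGamma]
  have hfact : ((Nat.factorial (k+1) : ℕ) : ℝ) = ((k:ℝ)+1) * ((Nat.factorial k : ℕ) : ℝ) := by
    rw [Nat.factorial_succ]; push_cast; ring
  have hkne : ((Nat.factorial k : ℕ) : ℝ) ≠ 0 := by positivity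
  have hRcne : Rc ≠ 0 := hRc.ne'
  rw [hfact]
  have hpow : (M*Rc^2)^(k+1) = M^(k+1) * Rc^(2*k+2) := by ring
  rw [hM] at hpow ⊢
  rw [hpow]
  have hk1 : ((k:ℝ)+1) ≠ 0 := by positivity
  field_simp
  ring
end

section
/- If U ~ Exp(λπ) and h ~ Exp(1) are independent, then for b > 0 and z > 0: P( b·h / U² ≥ z ) = ∫₀^∞ λπ·e^{−λπu}·e^{−(z/b)u²} du = √(ψ/(2z)) · e^{ψ/(8z)} · D_{−1}(√(ψ/(2z))), where ψ = b·(λπ)² and D_{−1} is the parabolic cylinder function. -/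
open MeasureTheory ProbabilityTheory Real Set

set_option autoImplicit false

/-- The complementary error function `erfc x = (2/√π) ∫_x^∞ e^{−t²} dt`. -/
noncomputable def erfc (x : ℝ) : ℝ := (2 / Real.sqrt π) * ∫ t in Set.Ioi x, Real.exp (-t ^ 2)

/-- The parabolic cylinder function of order −1:
`D_{−1}(x) = e^{x²/4} √(π/2) erfc(x/√2)`. -/
noncomputable def Dm1 (x : ℝ) : ℝ :=
  Real.exp (x ^ 2 / 4) * Real.sqrt (π / 2) * erfc (x / Real.sqrt 2)

open Filter Topology

lemma integral_Ioi_comp_add (g : ℝ → ℝ) (a d : ℝ) :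
    ∫ x in Ioi a, g (x + d) = ∫ x in Ioi (a + d), g x := by
  rw [← integral_indicator measurableSet_Ioi, ← integral_indicator measurableSet_Ioi]
  have h : ∀ x : ℝ, (Ioi a).indicator (fun x => g (x + d)) x
      = (Ioi (a + d)).indicator g (x + d) := by
    intro x
    by_cases hx : x ∈ Ioi a
    · rw [indicator_of_mem hx, indicator_of_mem (by simpa using add_lt_add_right hx d)]
    · rw [indicator_of_notMem hx, indicator_of_notMem (by simpa using hx)]
  simp_rw [h]
  exact integral_add_right_eq_self _ d

lemma part2core (a c : ℝ) (ha : 0 < a) (hc : 0 < c) :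
    ∫ u in Ioi (0:ℝ), a * Real.exp (-(a * u)) * Real.exp (-c * u ^ 2)
      = a * Real.exp (a ^ 2 / (4 * c)) * ((Real.sqrt c)⁻¹ *
          ∫ t in Ioi (a / (2 * Real.sqrt c)), Real.exp (-t ^ 2)) := by
  have hc' : (Real.sqrt c) ≠ 0 := (Real.sqrt_pos.mpr hc).ne'
  have hcc : Real.sqrt c * Real.sqrt c = c := Real.mul_self_sqrt hc.le
  have hpow : ∀ v : ℝ, (Real.sqrt c * v) ^ 2 = c * v ^ 2 := by
    intro v; rw [mul_pow, Real.sq_sqrt hc.le]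
  have h1 : ∀ u : ℝ, a * Real.exp (-(a * u)) * Real.exp (-c * u ^ 2)
      = (a * Real.exp (a ^ 2 / (4 * c))) *
        Real.exp (-((Real.sqrt c * (u + a / (2 * c))) ^ 2)) := by
    intro u
    rw [hpow, mul_assoc, ← Real.exp_add, mul_assoc, ← Real.exp_add]
    congr 1
    congr 1; field_simp
    ring
  simp_rw [h1]
  rw [integral_const_mul]
  congr 1
  have h2 : ∫ u in Ioi (0:ℝ), Real.exp (-(Real.sqrt c * (u + a / (2 * c))) ^ 2)
      = ∫ v in Ioi (a / (2 * c)), Real.exp (-(Real.sqrt c * v) ^ 2) := by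
    simpa using integral_Ioi_comp_add (fun v => Real.exp (-(Real.sqrt c * v) ^ 2)) 0 (a / (2 * c))
  rw [h2]
  have h3 := integral_comp_mul_left_Ioi (fun t => Real.exp (-t ^ 2)) (a / (2 * c))
      (Real.sqrt_pos.mpr hc)
  simp only [smul_eq_mul] at h3
  rw [h3]
  have hbnd : Real.sqrt c * (a / (2 * c)) = a / (2 * Real.sqrt c) := by
    field_simp
    nlinarith [Real.sq_sqrt hc.le]
  rw [hbnd]

/-- Asymptotic downlink SNR cdf complement for `α = 4` (equation (28)): if `U ~ Exp(λπ)`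
and `h ~ Exp(1)` are independent, then for `b, z > 0` and `ψ = b(λπ)²`,
`P(b·h/U² ≥ z) = ∫₀^∞ λπ e^{−λπu} e^{−(z/b)u²} du = √(ψ/(2z)) e^{ψ/(8z)} D_{−1}(√(ψ/(2z)))`. -/
theorem stmt12 {Ω : Type*} [MeasurableSpace Ω] (μ : Measure Ω) [IsProbabilityMeasure μ]
    (lam b z ψ : ℝ) (hlam : 0 < lam) (hb : 0 < b) (hz : 0 < z)
    (hψ : ψ = b * (lam * π) ^ 2)
    (U h : Ω → ℝ) (hUm : Measurable U) (hhm : Measurable h)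
    (hU : ∀ t : ℝ, 0 ≤ t → (μ {ω | t ≤ U ω}).toReal = Real.exp (-(lam * π * t)))
    (hh : ∀ t : ℝ, 0 ≤ t → (μ {ω | t ≤ h ω}).toReal = Real.exp (-t))
    (hind : IndepFun U h μ) :
    (μ {ω | z ≤ b * h ω / (U ω) ^ 2}).toReal
        = ∫ u in Set.Ioi (0:ℝ), lam * π * Real.exp (-(lam * π * u)) * Real.exp (-(z / b) * u ^ 2)
    ∧ (∫ u in Set.Ioi (0:ℝ), lam * π * Real.exp (-(lam * π * u)) * Real.exp (-(z / b) * u ^ 2))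
        = Real.sqrt (ψ / (2 * z)) * Real.exp (ψ / (8 * z)) * Dm1 (Real.sqrt (ψ / (2 * z))) := by
  have hπ : (0:ℝ) < π := Real.pi_pos
  have ha : 0 < lam * π := mul_pos hlam hπ
  have hc : 0 < z / b := div_pos hz hb
  constructor
  · -- Part 1
    -- tails in ℝ≥0∞
    have hU' : ∀ t : ℝ, 0 ≤ t →
        μ {ω | t ≤ U ω} = ENNReal.ofReal (Real.exp (-(lam * π * t))) := by
      intro t ht
      rw [← hU t ht, ENNReal.ofReal_toReal (measure_ne_top μ _)]
    have hh' : ∀ t : ℝ, 0 ≤ t →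
        μ {ω | t ≤ h ω} = ENNReal.ofReal (Real.exp (-t)) := by
      intro t ht
      rw [← hh t ht, ENNReal.ofReal_toReal (measure_ne_top μ _)]
    -- open tail
    have hUo : ∀ t : ℝ, 0 ≤ t →
        μ {ω | t < U ω} = ENNReal.ofReal (Real.exp (-(lam * π * t))) := by
      intro t ht
      refine le_antisymm ?_ ?_
      · rw [← hU' t ht]
        exact measure_mono (Set.setOf_subset_setOf.mpr fun ω hω => le_of_lt hω)
      · have hcont : Continuous fun x : ℝ => Real.exp (-(lam * π * x)) := by continuity
        have h0 : Tendsto (fun n : ℕ => t + 1 / ((n : ℝ) + 1)) atTop (𝓝 t) := by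
          simpa using tendsto_const_nhds.add (tendsto_one_div_add_atTop_nhds_zero_nat (𝕜 := ℝ))
        have hseq : Tendsto
            (fun n : ℕ => ENNReal.ofReal (Real.exp (-(lam * π * (t + 1 / ((n : ℝ) + 1))))))
            atTop (𝓝 (ENNReal.ofReal (Real.exp (-(lam * π * t))))) :=
          (ENNReal.continuous_ofReal.tendsto _).comp ((hcont.tendsto t).comp h0)
        refine le_of_tendsto hseq (Eventually.of_forall fun n => ?_)
        have hn : (0:ℝ) < 1 / ((n : ℝ) + 1) := by positivity
        rw [← hU' (t + 1 / ((n : ℝ) + 1)) (by positivity)]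
        exact measure_mono (Set.setOf_subset_setOf.mpr fun ω hω => lt_of_lt_of_le (by linarith) hω)
    -- law of U is the exponential measure
    haveI : IsProbabilityMeasure (Measure.map U μ) := Measure.isProbabilityMeasure_map hUm.aemeasurable
    haveI : IsProbabilityMeasure (Measure.map h μ) := Measure.isProbabilityMeasure_map hhm.aemeasurable
    haveI : IsProbabilityMeasure (expMeasure (lam * π)) := isProbabilityMeasure_expMeasure ha
    have hlawU : Measure.map U μ = expMeasure (lam * π) := by
      refine Measure.ext_of_Iic _ _ (fun t => ?_)
      rw [Measure.map_apply hUm measurableSet_Iic]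
      have hexp_Iic : expMeasure (lam * π) (Iic t)
          = ENNReal.ofReal (if 0 ≤ t then 1 - Real.exp (-(lam * π * t)) else 0) := by
        rw [← ProbabilityTheory.ofReal_cdf (expMeasure (lam * π)) t]
        congr 1
        exact cdf_expMeasure_eq ha t
      rw [hexp_Iic]
      by_cases ht : 0 ≤ t
      · rw [if_pos ht]
        have hcompl : U ⁻¹' Iic t = {ω | t < U ω}ᶜ := by
          ext ω; simp [not_lt]
        rw [hcompl, measure_compl (measurableSet_lt measurable_const hUm)
          (measure_ne_top μ _), hUo t ht, measure_univ,
          ENNReal.ofReal_sub _ (Real.exp_nonneg _), ENNReal.ofReal_one]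
      · rw [if_neg ht, ENNReal.ofReal_zero]
        have hz0 : μ {ω | U ω < 0} = 0 := by
          have hcompl : {ω | U ω < 0} = {ω | (0:ℝ) ≤ U ω}ᶜ := by
            ext ω; simp [not_le]
          rw [hcompl, measure_compl (measurableSet_le measurable_const hUm)
            (measure_ne_top μ _), measure_univ, hU' 0 le_rfl]
          simp
        refine le_antisymm ?_ zero_le
        calc μ (U ⁻¹' Iic t) ≤ μ {ω | U ω < 0} :=
              measure_mono fun ω hω => lt_of_le_of_lt hω (not_le.mp ht)
          _ = 0 := hz0
    -- product structure
    have hmap : Measure.map (fun ω => (U ω, h ω)) μ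
        = (Measure.map U μ).prod (Measure.map h μ) :=
      (ProbabilityTheory.indepFun_iff_map_prod_eq_prod_map_map hUm.aemeasurable
        hhm.aemeasurable).mp hind
    have hS : MeasurableSet {p : ℝ × ℝ | z ≤ b * p.2 / p.1 ^ 2} :=
      measurableSet_le measurable_const
        ((measurable_const.mul measurable_snd).div (measurable_fst.pow_const 2))
    have hμE : μ {ω | z ≤ b * h ω / (U ω) ^ 2}
        = ((Measure.map U μ).prod (Measure.map h μ)) {p : ℝ × ℝ | z ≤ b * p.2 / p.1 ^ 2} := by
      rw [← hmap, Measure.map_apply (hUm.prodMk hhm) hS]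
      rfl
    have hprod : ((Measure.map U μ).prod (Measure.map h μ)) {p : ℝ × ℝ | z ≤ b * p.2 / p.1 ^ 2}
        = ∫⁻ u, (Measure.map h μ) (Prod.mk u ⁻¹' {p : ℝ × ℝ | z ≤ b * p.2 / p.1 ^ 2})
            ∂(Measure.map U μ) :=
      Measure.prod_apply hS
    -- slices
    have hslice : ∀ u : ℝ, u ≠ 0 →
        (Measure.map h μ) (Prod.mk u ⁻¹' {p : ℝ × ℝ | z ≤ b * p.2 / p.1 ^ 2})
          = ENNReal.ofReal (Real.exp (-(z / b) * u ^ 2)) := by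
      intro u hu
      have hu2 : (0:ℝ) < u ^ 2 := by positivity
      have hset : Prod.mk u ⁻¹' {p : ℝ × ℝ | z ≤ b * p.2 / p.1 ^ 2}
          = Ici (z * u ^ 2 / b) := by
        ext v
        simp only [mem_preimage, mem_setOf_eq, mem_Ici]
        rw [le_div_iff₀ hu2, div_le_iff₀ hb]
        constructor <;> intro h' <;> linarith
      rw [hset, Measure.map_apply hhm measurableSet_Ici]
      have hpre : h ⁻¹' Ici (z * u ^ 2 / b) = {ω | z * u ^ 2 / b ≤ h ω} := rfl
      rw [hpre, hh' _ (by positivity)]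
      congr 1
      ring
    have h0law : (Measure.map U μ) {(0:ℝ)} = 0 := by
      rw [hlawU]
      have habs : expMeasure (lam * π) ≪ (volume : Measure ℝ) :=
        withDensity_absolutelyContinuous _ _
      exact habs (measure_singleton 0)
    have hcongr : ∫⁻ u, (Measure.map h μ) (Prod.mk u ⁻¹' {p : ℝ × ℝ | z ≤ b * p.2 / p.1 ^ 2})
          ∂(Measure.map U μ)
        = ∫⁻ u, ENNReal.ofReal (Real.exp (-(z / b) * u ^ 2)) ∂(Measure.map U μ) := by
      refine lintegral_congr_ae ?_
      rw [Filter.EventuallyEq, ae_iff]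
      refine measure_mono_null ?_ h0law
      intro u hu
      simp only [mem_setOf_eq] at hu
      by_contra h0
      simp only [mem_singleton_iff] at h0
      exact hu (hslice u h0)
    -- with density
    have hdens : expMeasure (lam * π) = (volume : Measure ℝ).withDensity
        (exponentialPDF (lam * π)) := rfl
    have hlint : ∫⁻ u, ENNReal.ofReal (Real.exp (-(z / b) * u ^ 2)) ∂(Measure.map U μ)
        = ∫⁻ u, exponentialPDF (lam * π) u * ENNReal.ofReal (Real.exp (-(z / b) * u ^ 2))
            ∂(volume : Measure ℝ) := by
      have hfm : Measurable (exponentialPDF (lam * π)) :=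
        (measurable_exponentialPDFReal (lam * π)).ennreal_ofReal
      have hgc : Continuous fun u : ℝ => Real.exp (-(z / b) * u ^ 2) :=
        Real.continuous_exp.comp (continuous_const.mul (continuous_pow 2))
      have hgm : Measurable fun u : ℝ => ENNReal.ofReal (Real.exp (-(z / b) * u ^ 2)) :=
        hgc.measurable.ennreal_ofReal
      rw [hlawU, hdens, lintegral_withDensity_eq_lintegral_mul _ hfm hgm]
      rfl
    -- restrict to Ioi 0
    have hsplit : ∫⁻ u, exponentialPDF (lam * π) u * ENNReal.ofReal (Real.exp (-(z / b) * u ^ 2))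
          ∂(volume : Measure ℝ)
        = ∫⁻ u in Ioi (0:ℝ),
            ENNReal.ofReal (lam * π * Real.exp (-(lam * π * u)) * Real.exp (-(z / b) * u ^ 2)) := by
      rw [← lintegral_add_compl
        (fun u => exponentialPDF (lam * π) u * ENNReal.ofReal (Real.exp (-(z / b) * u ^ 2)))
        (measurableSet_Ioi (a := (0:ℝ)))]
      have hIic : ∫⁻ u in (Ioi (0:ℝ))ᶜ,
          exponentialPDF (lam * π) u * ENNReal.ofReal (Real.exp (-(z / b) * u ^ 2)) = 0 := by
        rw [compl_Ioi]
        rw [← Measure.restrict_congr_set Iio_ae_eq_Iic]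
        rw [setLIntegral_congr_fun measurableSet_Iio
          (fun u hu => by
            rw [exponentialPDF_of_neg hu, zero_mul])]
        simp
      rw [hIic, add_zero]
      refine setLIntegral_congr_fun measurableSet_Ioi
        (fun u hu => ?_)
      rw [exponentialPDF_of_nonneg (le_of_lt hu),
        ← ENNReal.ofReal_mul (by positivity)]
    -- back to Bochner integral
    have hnn : (0:ℝ → ℝ) ≤ᵐ[volume.restrict (Ioi (0:ℝ))]
        fun u => lam * π * Real.exp (-(lam * π * u)) * Real.exp (-(z / b) * u ^ 2) :=
      Filter.Eventually.of_forall fun u => by positivity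
    have hmeas : AEStronglyMeasurable
        (fun u => lam * π * Real.exp (-(lam * π * u)) * Real.exp (-(z / b) * u ^ 2))
        (volume.restrict (Ioi (0:ℝ))) :=
      (Continuous.aestronglyMeasurable
        (((continuous_const.mul (Real.continuous_exp.comp
          (continuous_const.mul continuous_id).neg)).mul
          (Real.continuous_exp.comp (continuous_const.mul (continuous_pow 2))))))
    rw [hμE, hprod, hcongr, hlint, hsplit,
      MeasureTheory.integral_eq_lintegral_of_nonneg_ae hnn hmeas]
  · -- Part 2
    rw [part2core (lam * π) (z / b) ha hc]
    have hψpos : 0 ≤ ψ / (2 * z) := by rw [hψ]; positivity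
    have hψ2 : ψ / (2 * z) = (lam * π) ^ 2 / (2 * (z / b)) := by
      rw [hψ]; field_simp
    have hs : Real.sqrt (ψ / (2 * z))
        = (lam * π) / (Real.sqrt 2 * Real.sqrt (z / b)) := by
      rw [hψ2, Real.sqrt_div (sq_nonneg _), Real.sqrt_sq ha.le,
        Real.sqrt_mul (by norm_num : (0:ℝ) ≤ 2)]
    have h22 : Real.sqrt 2 * Real.sqrt 2 = 2 := Real.mul_self_sqrt (by norm_num)
    have h22' : Real.sqrt 2 ^ 2 = 2 := Real.sq_sqrt (by norm_num)
    have h20 : Real.sqrt 2 ≠ 0 := by positivity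
    have hc0 : Real.sqrt (z / b) ≠ 0 := (Real.sqrt_pos.mpr hc).ne'
    have hπ0 : Real.sqrt π ≠ 0 := (Real.sqrt_pos.mpr hπ).ne'
    have harg : Real.sqrt (ψ / (2 * z)) / Real.sqrt 2
        = (lam * π) / (2 * Real.sqrt (z / b)) := by
      rw [hs]
      field_simp
      linear_combination (-1) * h22'
    have hs2 : Real.sqrt (ψ / (2 * z)) ^ 2 = ψ / (2 * z) := Real.sq_sqrt hψpos
    have hE : Real.exp (ψ / (8 * z)) * Real.exp (ψ / (2 * z) / 4)
        = Real.exp ((lam * π) ^ 2 / (4 * (z / b))) := by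
      rw [← Real.exp_add]
      congr 1
      rw [hψ]; field_simp; ring
    unfold Dm1 erfc
    rw [harg, hs2]
    rw [show Real.sqrt (π / 2) = Real.sqrt π / Real.sqrt 2 from Real.sqrt_div hπ.le 2]
    set J := ∫ t in Ioi ((lam * π) / (2 * Real.sqrt (z / b))), Real.exp (-t ^ 2) with hJ
    have step : Real.sqrt (ψ / (2 * z)) * Real.exp (ψ / (8 * z)) *
          (Real.exp (ψ / (2 * z) / 4) * (Real.sqrt π / Real.sqrt 2) * (2 / Real.sqrt π * J))
        = (Real.exp (ψ / (8 * z)) * Real.exp (ψ / (2 * z) / 4)) *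
          (Real.sqrt (ψ / (2 * z)) * (Real.sqrt π / Real.sqrt 2) * (2 / Real.sqrt π)) * J := by
      ring
    rw [step, hE]
    have hcoef : Real.sqrt (ψ / (2 * z)) * (Real.sqrt π / Real.sqrt 2) * (2 / Real.sqrt π)
        = (lam * π) * (Real.sqrt (z / b))⁻¹ := by
      rw [hs]
      field_simp
      linear_combination (-1) * h22'
    rw [hcoef]
    ring
end
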